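/- For k ≥ 3 and μ ∈ ℝ, the theta functions θ_j^{(k,μ)}(z) = Σ_{n∈ℤ} exp(2πi[½ k i (n + (μ+j)/k)² + (n + (μ+j)/k) k z]), j = 1,...,k, are pairwise orthogonal with respect to the inner product ⟨f,g⟩ = ∫_0^1 ∫_0^1 f(z) conj(g(z)) exp((kπ/2)(z−z̄)²) dx dy (z = x+iy). -/

import Mathlib

open intervalIntegral

/-- The k-th order theta function with characteristics (μ, 0) for the lattice ℤ + iℤ:
θ_j^{(k,μ)}(z) = Σ_{n∈ℤ} exp(2πi[½ k i (n + (μ+j)/k)² + (n + (μ+j)/k) k z]). -/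
noncomputable def theta (k : ℕ) (μ : ℝ) (j : ℕ) (z : ℂ) : ℂ :=
  ∑' n : ℤ, Complex.exp (2 * (Real.pi : ℂ) * Complex.I *
    ((1 / 2 : ℂ) * (k : ℂ) * Complex.I * ((n : ℂ) + ((μ : ℂ) + (j : ℂ)) / (k : ℂ)) ^ 2 +
      ((n : ℂ) + ((μ : ℂ) + (j : ℂ)) / (k : ℂ)) * (k : ℂ) * z))

open Complex MeasureTheory

/-- A single term of the theta series, with a real parameter `a` for the characteristic. -/
noncomputable def gterm (k : ℕ) (a : ℝ) (n : ℤ) (z : ℂ) : ℂ :=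
  Complex.exp (2 * (Real.pi : ℂ) * Complex.I *
    ((1 / 2 : ℂ) * (k : ℂ) * Complex.I * ((n : ℂ) + (a : ℂ)) ^ 2 +
      ((n : ℂ) + (a : ℂ)) * (k : ℂ) * z))

lemma theta_eq (k : ℕ) (μ : ℝ) (j : ℕ) (z : ℂ) :
    theta k μ j z = ∑' n : ℤ, gterm k ((μ + j) / k) n z := by
  have h : ((((μ + j) / k : ℝ)) : ℂ) = ((μ : ℂ) + (j : ℂ)) / (k : ℂ) := by push_cast; ring
  simp only [theta, gterm, h]

lemma gterm_eq (k : ℕ) (a : ℝ) (n : ℤ) (x y : ℝ) :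
    gterm k a n ((x : ℂ) + (y : ℂ) * Complex.I) =
      Complex.exp ((( -(Real.pi * k * ((n : ℝ) + a) ^ 2) - 2 * Real.pi * k * ((n : ℝ) + a) * y : ℝ)) : ℂ) *
        Complex.exp (((2 * Real.pi * k * ((n : ℝ) + a) : ℝ) : ℂ) * Complex.I * (x : ℂ)) := by
  rw [gterm, ← Complex.exp_add]
  congr 1
  push_cast
  linear_combination (Real.pi * (k : ℂ) * ((n : ℂ) + a) ^ 2 +
    2 * Real.pi * (k : ℂ) * ((n : ℂ) + a) * y) * Complex.I_sq

lemma norm_gterm (k : ℕ) (a : ℝ) (n : ℤ) (x y : ℝ) :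
    ‖gterm k a n ((x : ℂ) + (y : ℂ) * Complex.I)‖ =
      Real.exp (-(Real.pi * k * ((n : ℝ) + a) ^ 2) - 2 * Real.pi * k * ((n : ℝ) + a) * y) := by
  rw [gterm_eq, norm_mul]
  have h1 : ((2 * Real.pi * k * ((n : ℝ) + a) : ℝ) : ℂ) * Complex.I * (x : ℂ) =
      ((2 * Real.pi * k * ((n : ℝ) + a) * x : ℝ) : ℂ) * Complex.I := by push_cast; ring
  rw [h1, Complex.norm_exp_ofReal,
    Complex.norm_exp_ofReal_mul_I, mul_one]

lemma summable_gterm (k : ℕ) (hk : 0 < k) (a : ℝ) (z : ℂ) :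
    Summable fun n : ℤ => gterm k a n z := by
  have h1 : Summable (jacobiTheta₂_term · ((k : ℂ) * z + (k : ℂ) * (a : ℂ) * Complex.I) ((k : ℂ) * Complex.I)) := by
    refine (summable_jacobiTheta₂_term_iff _ _).mpr ?_
    simpa using (Nat.cast_pos.mpr hk : (0 : ℝ) < k)
  have h2 := h1.mul_right (Complex.exp ((Real.pi : ℂ) * Complex.I * ((k : ℂ) * Complex.I) * (a : ℂ) ^ 2 +
    2 * (Real.pi : ℂ) * Complex.I * (a : ℂ) * (k : ℂ) * z))
  refine h2.congr fun n => ?_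
  rw [jacobiTheta₂_term, gterm, ← Complex.exp_add]
  congr 1
  ring

lemma summable_norm_gterm (k : ℕ) (hk : 0 < k) (a : ℝ) (z : ℂ) :
    Summable fun n : ℤ => ‖gterm k a n z‖ :=
  summable_norm_iff.mpr (summable_gterm k hk a z)


/-- A single term of the product θ_j(z) conj(θ_l(z)) h(z), at z = x + iy. -/
noncomputable def Fterm (k : ℕ) (a b y : ℝ) (p : ℤ × ℤ) (x : ℝ) : ℂ :=
  gterm k a p.1 ((x : ℂ) + (y : ℂ) * Complex.I) *
    star (gterm k b p.2 ((x : ℂ) + (y : ℂ) * Complex.I)) *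
    Complex.exp (((-(2 * k * Real.pi * y ^ 2) : ℝ)) : ℂ)

lemma Fterm_eq (k : ℕ) (a b y : ℝ) (p : ℤ × ℤ) (x : ℝ) :
    Fterm k a b y p x =
      (Complex.exp ((( -(Real.pi * k * ((p.1 : ℝ) + a) ^ 2) - 2 * Real.pi * k * ((p.1 : ℝ) + a) * y : ℝ)) : ℂ) *
        Complex.exp ((( -(Real.pi * k * ((p.2 : ℝ) + b) ^ 2) - 2 * Real.pi * k * ((p.2 : ℝ) + b) * y : ℝ)) : ℂ) *
        Complex.exp (((-(2 * k * Real.pi * y ^ 2) : ℝ)) : ℂ)) *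
      Complex.exp ((((2 * Real.pi * k * ((p.1 : ℝ) + a) - 2 * Real.pi * k * ((p.2 : ℝ) + b) : ℝ)) : ℂ) *
        Complex.I * (x : ℂ)) := by
  rw [Fterm, gterm_eq, gterm_eq]
  rw [star_mul']
  simp only [Complex.star_def, ← Complex.exp_conj]
  simp only [map_mul, Complex.conj_ofReal, Complex.conj_I]
  simp only [← Complex.exp_add]
  congr 1
  push_cast
  ring

lemma norm_Fterm (k : ℕ) (a b y : ℝ) (p : ℤ × ℤ) (x : ℝ) :
    ‖Fterm k a b y p x‖ =
      Real.exp (-(Real.pi * k * ((p.1 : ℝ) + a) ^ 2) - 2 * Real.pi * k * ((p.1 : ℝ) + a) * y) *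
        Real.exp (-(Real.pi * k * ((p.2 : ℝ) + b) ^ 2) - 2 * Real.pi * k * ((p.2 : ℝ) + b) * y) *
        Real.exp (-(2 * k * Real.pi * y ^ 2)) := by
  rw [Fterm, norm_mul, norm_mul, norm_star, norm_gterm, norm_gterm,
    Complex.norm_exp_ofReal]

lemma continuous_Fterm (k : ℕ) (a b y : ℝ) (p : ℤ × ℤ) :
    Continuous fun x : ℝ => Fterm k a b y p x := by
  have hg : ∀ (c : ℝ) (n : ℤ), Continuous fun x : ℝ =>
      gterm k c n ((x : ℂ) + (y : ℂ) * Complex.I) := by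
    intro c n
    unfold gterm
    fun_prop
  unfold Fterm
  exact (((hg a p.1).mul ((hg b p.2).star)).mul continuous_const)

lemma summable_exp_aux (k : ℕ) (hk : 0 < k) (c y : ℝ) :
    Summable fun n : ℤ =>
      Real.exp (-(Real.pi * k * ((n : ℝ) + c) ^ 2) - 2 * Real.pi * k * ((n : ℝ) + c) * y) :=
  (summable_norm_gterm k hk c (((0 : ℝ) : ℂ) + (y : ℂ) * Complex.I)).congr
    fun n => norm_gterm k c n 0 y

lemma summable_norm_Fterm (k : ℕ) (hk : 0 < k) (a b y : ℝ) (x : ℝ) :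
    Summable fun p : ℤ × ℤ => ‖Fterm k a b y p x‖ := by
  have h := ((summable_exp_aux k hk a y).mul_of_nonneg (summable_exp_aux k hk b y)
    (fun n => (Real.exp_pos _).le) (fun n => (Real.exp_pos _).le)).mul_right
    (Real.exp (-(2 * k * Real.pi * y ^ 2)))
  exact h.congr fun p => (norm_Fterm k a b y p x).symm

lemma integral_Fterm_zero (k : ℕ) (hk : 0 < k) (μ : ℝ) (j l : ℕ)
    (hj : 1 ≤ j) (hj' : j ≤ k) (hl : 1 ≤ l) (hl' : l ≤ k) (hne : j ≠ l)
    (y : ℝ) (p : ℤ × ℤ) :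
    ∫ x in (0 : ℝ)..1, Fterm k ((μ + j) / k) ((μ + l) / k) y p x = 0 := by
  have hkR : (k : ℝ) ≠ 0 := Nat.cast_ne_zero.mpr (by omega)
  set N : ℤ := k * p.1 - k * p.2 + j - l with hNdef
  have hN : N ≠ 0 := by
    intro h
    have hd : (k : ℤ) ∣ ((j : ℤ) - l) := ⟨p.2 - p.1, by rw [hNdef] at h; ring_nf; omega⟩
    have h2 : ((j : ℤ) - l) = 0 :=
      Int.eq_zero_of_dvd_of_natAbs_lt_natAbs hd (by omega)
    omega
  have hc : ((((2 * Real.pi * k * ((p.1 : ℝ) + (μ + j) / k) -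
      2 * Real.pi * k * ((p.2 : ℝ) + (μ + l) / k) : ℝ))) : ℂ) * Complex.I =
      (N : ℂ) * (2 * (Real.pi : ℂ) * Complex.I) := by
    have hr : 2 * Real.pi * (k : ℝ) * ((p.1 : ℝ) + (μ + j) / k) -
        2 * Real.pi * (k : ℝ) * ((p.2 : ℝ) + (μ + l) / k) = (N : ℝ) * (2 * Real.pi) := by
      rw [hNdef]
      push_cast
      field_simp
      ring
    rw [hr]
    push_cast
    ring
  have hcne : (N : ℂ) * (2 * (Real.pi : ℂ) * Complex.I) ≠ 0 :=
    mul_ne_zero (Int.cast_ne_zero.mpr hN) Complex.two_pi_I_ne_zero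
  simp_rw [Fterm_eq, hc]
  rw [intervalIntegral.integral_const_mul, integral_exp_mul_complex hcne]
  have h1 : Complex.exp ((N : ℂ) * (2 * (Real.pi : ℂ) * Complex.I) * ((1 : ℝ) : ℂ)) = 1 := by
    rw [show ((N : ℂ) * (2 * (Real.pi : ℂ) * Complex.I) * ((1 : ℝ) : ℂ)) =
      (N : ℂ) * (2 * (Real.pi : ℂ) * Complex.I) from by norm_num]
    exact Complex.exp_int_mul_two_pi_mul_I N
  have h0 : Complex.exp ((N : ℂ) * (2 * (Real.pi : ℂ) * Complex.I) * ((0 : ℝ) : ℂ)) = 1 := by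
    norm_num
  rw [h1, h0]
  simp

/-- for k ≥ 3 and real μ, the theta functions θ_j^{(k,μ)}, j = 1,...,k,
are pairwise orthogonal with respect to
⟨f,g⟩ = ∫₀¹∫₀¹ f(z) conj(g(z)) exp((kπ/2)(z − z̄)²) dx dy, z = x + iy. -/
theorem stmt_15 (k : ℕ) (hk : 3 ≤ k) (μ : ℝ) (j l : ℕ)
    (hj : 1 ≤ j) (hj' : j ≤ k) (hl : 1 ≤ l) (hl' : l ≤ k) (hne : j ≠ l) :
    (∫ y in (0 : ℝ)..1, ∫ x in (0 : ℝ)..1,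
      theta k μ j (x + y * Complex.I) *
        (starRingEnd ℂ) (theta k μ l (x + y * Complex.I)) *
        Complex.exp (((k : ℂ) * Real.pi / 2) *
          ((x + y * Complex.I) - (starRingEnd ℂ) (x + y * Complex.I)) ^ 2)) = 0 := by
  have hk0 : 0 < k := by omega
  have key : ∀ y : ℝ, (∫ x in (0 : ℝ)..1,
      theta k μ j (x + y * Complex.I) *
        (starRingEnd ℂ) (theta k μ l (x + y * Complex.I)) *
        Complex.exp (((k : ℂ) * Real.pi / 2) *
          ((x + y * Complex.I) - (starRingEnd ℂ) (x + y * Complex.I)) ^ 2)) = 0 := by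
    intro y
    have hrep : ∀ x : ℝ, theta k μ j (x + y * Complex.I) *
        (starRingEnd ℂ) (theta k μ l (x + y * Complex.I)) *
        Complex.exp (((k : ℂ) * Real.pi / 2) *
          (((x : ℂ) + y * Complex.I) - (starRingEnd ℂ) ((x : ℂ) + y * Complex.I)) ^ 2)
        = ∑' p : ℤ × ℤ, Fterm k ((μ + j) / k) ((μ + l) / k) y p x := by
      intro x
      have hW : Complex.exp (((k : ℂ) * Real.pi / 2) *
          (((x : ℂ) + y * Complex.I) - (starRingEnd ℂ) ((x : ℂ) + y * Complex.I)) ^ 2) =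
          Complex.exp (((-(2 * k * Real.pi * y ^ 2) : ℝ)) : ℂ) := by
        have hc : (starRingEnd ℂ) ((x : ℂ) + y * Complex.I) = (x : ℂ) - y * Complex.I := by
          simp [Complex.ext_iff]
        rw [hc]
        congr 1
        push_cast
        linear_combination (2 * (k : ℂ) * (Real.pi : ℂ) * (y : ℂ) ^ 2) * Complex.I_sq
      rw [hW, theta_eq, theta_eq]
      rw [starRingEnd_apply, tsum_star]
      rw [tsum_mul_tsum_of_summable_norm
        (summable_norm_gterm k hk0 ((μ + j) / k) ((x : ℂ) + y * Complex.I))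
        (by simpa [norm_star] using
          summable_norm_gterm k hk0 ((μ + l) / k) ((x : ℂ) + y * Complex.I))]
      rw [← tsum_mul_right]
      rfl
    rw [integral_congr (g := fun x : ℝ =>
      ∑' p : ℤ × ℤ, Fterm k ((μ + j) / k) ((μ + l) / k) y p x) (fun x _ => hrep x)]
    rw [integral_of_le zero_le_one]
    have hsum : Summable fun p : ℤ × ℤ =>
        ∫ x in Set.Ioc (0 : ℝ) 1, ‖Fterm k ((μ + j) / k) ((μ + l) / k) y p x‖ := by
      have hG : ∀ p : ℤ × ℤ, ∫ x in Set.Ioc (0 : ℝ) 1,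
          ‖Fterm k ((μ + j) / k) ((μ + l) / k) y p x‖ =
          ‖Fterm k ((μ + j) / k) ((μ + l) / k) y p 0‖ := by
        intro p
        simp_rw [norm_Fterm]
        rw [MeasureTheory.setIntegral_const]
        simp [Real.volume_Ioc]
      exact (summable_norm_Fterm k hk0 ((μ + j) / k) ((μ + l) / k) y 0).congr
        fun p => (hG p).symm
    rw [← MeasureTheory.integral_tsum_of_summable_integral_norm
      (fun p => ((continuous_Fterm k ((μ + j) / k) ((μ + l) / k) y p).integrableOn_Ioc)) hsum]
    have hz : ∀ p : ℤ × ℤ,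
        ∫ x in Set.Ioc (0 : ℝ) 1, Fterm k ((μ + j) / k) ((μ + l) / k) y p x = 0 := by
      intro p
      rw [← integral_of_le zero_le_one]
      exact integral_Fterm_zero k hk0 μ j l hj hj' hl hl' hne y p
    simp_rw [hz]
    exact tsum_zero
  rw [integral_congr (g := fun _ : ℝ => (0 : ℂ)) (fun y _ => key y)]
  simp
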